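/- arXiv:2104.05001 — 7 statements merged into one kernel-verified Lean document; each statement's English description precedes it below -/
import Mathlib

section
/- For every z, w in the open unit disc of ℂ with z ≠ w, the point H(z,w) = ((1−zw)/(z−w), i(1+zw)/(z−w), −i(z+w)/(z−w)) belongs to the domain D^{(2)}_{1,∞}; that is, writing H(z,w) = (h₁,h₂,h₃), one has h₁² + h₂² − h₃² = 1, |h₁|² + |h₂|² − |h₃|² > 1, and Im(h₂·(conj(h₁) + conj(h₃))) > 0. -/
/-- The map `H(z,w) = ((1−zw)/(z−w), i(1+zw)/(z−w), −i(z+w)/(z−w))`. -/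
noncomputable def Hmap (z w : ℂ) : ℂ × ℂ × ℂ :=
  ((1 - z * w) / (z - w), Complex.I * (1 + z * w) / (z - w),
    -Complex.I * (z + w) / (z - w))

/-- For `z ≠ w` in the unit disc, `H(z,w)` lies in `D^{(2)}_{1,∞}`. -/
theorem Hmap_mem_D2_one_infty (z w : ℂ)
    (hz : ‖z‖ < 1) (hw : ‖w‖ < 1) (hzw : z ≠ w) :
    (Hmap z w).1 ^ 2 + (Hmap z w).2.1 ^ 2 - (Hmap z w).2.2 ^ 2 = 1 ∧
    1 < ‖(Hmap z w).1‖ ^ 2 + ‖(Hmap z w).2.1‖ ^ 2 -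
        ‖(Hmap z w).2.2‖ ^ 2 ∧
    0 < ((Hmap z w).2.1 *
        ((starRingEnd ℂ) (Hmap z w).1 + (starRingEnd ℂ) (Hmap z w).2.2)).im := by
  have hd : z - w ≠ 0 := sub_ne_zero.mpr hzw
  have hnz : Complex.normSq z < 1 := by
    rw [← Complex.sq_norm]; nlinarith [norm_nonneg z]
  have hnw : Complex.normSq w < 1 := by
    rw [← Complex.sq_norm]; nlinarith [norm_nonneg w]
  have hz2 : z.re * z.re + z.im * z.im < 1 := by
    rw [← Complex.normSq_apply]; exact hnz
  have hw2 : w.re * w.re + w.im * w.im < 1 := by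
    rw [← Complex.normSq_apply]; exact hnw
  refine ⟨?_, ?_, ?_⟩
  · simp only [Hmap]
    field_simp
    ring_nf
    simp [Complex.I_sq]
    ring
  · simp only [Hmap]
    rw [norm_div, norm_div, norm_div, div_pow, div_pow, div_pow,
      ← add_div, div_sub_div_same, lt_div_iff₀ (pow_pos (norm_pos_iff.mpr hd) 2)]
    simp only [Complex.sq_norm, Complex.normSq_apply, Complex.mul_re, Complex.mul_im,
      Complex.sub_re, Complex.sub_im, Complex.add_re, Complex.add_im, Complex.one_re,
      Complex.one_im, Complex.I_re, Complex.I_im, Complex.neg_re, Complex.neg_im]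
    ring_nf
    nlinarith [mul_pos (by nlinarith : (0:ℝ) < 1 - (z.re*z.re+z.im*z.im))
      (by nlinarith : (0:ℝ) < 1 - (w.re*w.re+w.im*w.im))]
  · have hprod : (Hmap z w).2.1 *
        ((starRingEnd ℂ) (Hmap z w).1 + (starRingEnd ℂ) (Hmap z w).2.2)
        = (Complex.I * (1 + z * w) *
            ((starRingEnd ℂ) (1 - z * w) + (starRingEnd ℂ) (-Complex.I * (z + w)))) /
          ((Complex.normSq (z - w) : ℝ) : ℂ) := by
      simp only [Hmap, map_div₀]
      rw [← add_div, div_mul_div_comm, Complex.mul_conj]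
    rw [hprod]
    rw [Complex.div_ofReal_im]
    apply div_pos _ (Complex.normSq_pos.mpr hd)
    simp only [Complex.mul_im, Complex.mul_re, Complex.add_re, Complex.add_im,
      Complex.sub_re, Complex.sub_im, Complex.one_re, Complex.one_im, Complex.I_re,
      Complex.I_im, Complex.conj_re, Complex.conj_im, Complex.neg_re, Complex.neg_im]
    ring_nf
    have hs : (0:ℝ) < 1 - (w.re * w.re + w.im * w.im) := by linarith
    have ht : (0:ℝ) < 1 - (z.re * z.re + z.im * z.im) := by linarith
    have h1y : (0:ℝ) < 1 + z.im := by nlinarith [sq_nonneg z.re]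
    nlinarith [mul_pos hs (mul_pos h1y h1y), mul_nonneg hs.le (sq_nonneg z.re),
      mul_nonneg ht.le (sq_nonneg (1 + w.im)), mul_nonneg ht.le (sq_nonneg w.re)]
end

section
/- For every z, w in the open unit disc of ℂ with z ≠ w, writing H(z,w) = (h₁,h₂,h₃), one has the identity |h₁|² + |h₂|² − |h₃|² = 2/ρ(z,w)² − 1, where ρ(z,w) = |(z−w)/(1−conj(z)·w)| is the pseudohyperbolic distance between z and w. -/
/-- The pseudohyperbolic distance `ρ(z,w) = |(z−w)/(1−conj(z)·w)|`. -/
noncomputable def rho (z w : ℂ) : ℝ :=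
  ‖(z - w) / (1 - (starRingEnd ℂ) z * w)‖

/-- For `z ≠ w` in the unit disc, writing `H(z,w) = (h₁,h₂,h₃)`, one has
`|h₁|² + |h₂|² − |h₃|² = 2/ρ(z,w)² − 1`. -/
theorem Hmap_norm_eq (z w : ℂ)
    (hz : ‖z‖ < 1) (hw : ‖w‖ < 1) (hzw : z ≠ w) :
    ‖(Hmap z w).1‖ ^ 2 + ‖(Hmap z w).2.1‖ ^ 2 -
        ‖(Hmap z w).2.2‖ ^ 2 = 2 / rho z w ^ 2 - 1 := by
  have hzw' : z - w ≠ 0 := sub_ne_zero.mpr hzw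
  have habs : ‖(starRingEnd ℂ) z * w‖ < 1 := by
    rw [norm_mul, Complex.norm_conj]
    nlinarith [norm_nonneg z, norm_nonneg w]
  have hden : (1 : ℂ) - (starRingEnd ℂ) z * w ≠ 0 := by
    intro h
    have : (starRingEnd ℂ) z * w = 1 := by linear_combination -h
    rw [this] at habs
    simp at habs
  have hA : Complex.normSq (z - w) ≠ 0 := (Complex.normSq_pos.mpr hzw').ne'
  have hB : Complex.normSq (1 - (starRingEnd ℂ) z * w) ≠ 0 :=
    (Complex.normSq_pos.mpr hden).ne'
  simp only [Hmap, rho, Complex.sq_norm, map_div₀, Complex.normSq_div]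
  field_simp
  have ha : ‖z - w‖ ^ 2 ≠ 0 := by
    simpa [Complex.sq_norm] using hA
  simp only [Complex.sq_norm, one_mul, Complex.normSq_apply, Complex.mul_re, Complex.mul_im,
    Complex.sub_re, Complex.sub_im, Complex.add_re, Complex.add_im, Complex.one_re,
    Complex.one_im, Complex.conj_re, Complex.conj_im,
    Complex.I_re, Complex.I_im, Complex.neg_re, Complex.neg_im]
  ring
end

section
/- The map H is a bijection from D²∖Δ onto D^{(2)}_{1,∞}; that is, H is injective on D²∖Δ and H(D²∖Δ) = D^{(2)}_{1,∞}. -/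
/-- The bidisc minus its diagonal, `D² ∖ Δ`. -/
def biDiscOffDiag : Set (ℂ × ℂ) :=
  {p | ‖p.1‖ < 1 ∧ ‖p.2‖ < 1 ∧ p.1 ≠ p.2}

/-- The domain `D^{(2)}_{1,∞}`. -/
def D2OneInfty : Set (ℂ × ℂ × ℂ) :=
  {q | 1 < ‖q.1‖ ^ 2 + ‖q.2.1‖ ^ 2 - ‖q.2.2‖ ^ 2 ∧
       q.1 ^ 2 + q.2.1 ^ 2 - q.2.2 ^ 2 = 1 ∧
       0 < (q.2.1 * ((starRingEnd ℂ) q.1 + (starRingEnd ℂ) q.2.2)).im}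

open Complex

/- ### Algebraic auxiliary lemmas -/

private lemma normSq_key (z w : ℂ) :
    normSq (1 - z*w) + normSq (1 + z*w) - normSq (z+w) - normSq (z-w)
      = 2*(1 - normSq z)*(1 - normSq w) := by
  simp [normSq_apply, mul_re, mul_im, sub_re, sub_im, add_re, add_im]; ring

private lemma imN_key (z w : ℂ) :
    (I*(1+z*w)*((starRingEnd ℂ) (1-z*w) + I*((starRingEnd ℂ) (z+w)))).im
      = 1 - normSq z * normSq w + (1 - normSq w)*z.im + (1 - normSq z)*w.im := by
  simp [normSq_apply, mul_re, mul_im, sub_re, sub_im, add_re, add_im]; ring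

private lemma prod_eq_N_div (z w : ℂ) (h : z ≠ w) :
    (Hmap z w).2.1 * ((starRingEnd ℂ) (Hmap z w).1 + (starRingEnd ℂ) (Hmap z w).2.2)
      = (I*(1+z*w)*((starRingEnd ℂ) (1-z*w) + I*((starRingEnd ℂ) (z+w))))
          / ((normSq (z-w) : ℝ) : ℂ) := by
  have h0 : z - w ≠ 0 := sub_ne_zero.2 h
  have h1 : (starRingEnd ℂ) z - (starRingEnd ℂ) w ≠ 0 :=
    sub_ne_zero.2 fun hc => h (star_injective hc)
  have h2 : ((normSq (z-w) : ℝ) : ℂ) = (z-w) * ((starRingEnd ℂ) z - (starRingEnd ℂ) w) := by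
    rw [← map_sub, Complex.mul_conj]
  rw [h2]
  simp only [Hmap, map_div₀, map_mul, map_add, map_sub, map_one, map_neg, conj_I]
  field_simp

private lemma abs1_sq (z w : ℂ) :
    ‖(1 - z*w)/(z-w)‖ ^ 2 = normSq (1-z*w) / normSq (z-w) := by
  rw [norm_div, div_pow, Complex.sq_norm, Complex.sq_norm]

private lemma abs2_sq (z w : ℂ) :
    ‖I*(1+z*w)/(z-w)‖ ^ 2 = normSq (1+z*w) / normSq (z-w) := by
  rw [norm_div, div_pow, Complex.sq_norm, Complex.sq_norm, map_mul, normSq_I, one_mul]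

private lemma abs3_sq (z w : ℂ) :
    ‖-I*(z+w)/(z-w)‖ ^ 2 = normSq (z+w) / normSq (z-w) := by
  rw [norm_div, div_pow, Complex.sq_norm, Complex.sq_norm, map_mul, normSq_neg, normSq_I, one_mul]

private lemma quadric_eq (z w : ℂ) (h : z - w ≠ 0) :
    ((1-z*w)/(z-w))^2 + (I*(1+z*w)/(z-w))^2 - (-I*(z+w)/(z-w))^2 = 1 := by
  field_simp
  linear_combination (1 + z^2*w^2 - z^2 - w^2) * Complex.I_sq

private lemma denom_rec (z w : ℂ) (h : z - w ≠ 0) :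
    (1-z*w)/(z-w) - I * (I*(1+z*w)/(z-w)) = 2/(z-w) := by
  field_simp
  linear_combination (-z*w - 1)*Complex.I_sq

private lemma rec_fst (z w : ℂ) (h : z - w ≠ 0) :
    (1 + I * (-I*(z+w)/(z-w))) / (2/(z-w)) = z := by
  field_simp
  linear_combination (-z - w)*Complex.I_sq

private lemma rec_snd (z w : ℂ) (h : z - w ≠ 0) :
    (I * (-I*(z+w)/(z-w)) - 1) / (2/(z-w)) = w := by
  field_simp
  linear_combination (-z - w)*Complex.I_sq

private lemma surj_c1 (q1 q2 q3 : ℂ) (hq : q1^2+q2^2-q3^2 = 1) (ht : q1 - I*q2 ≠ 0) :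
    1 - ((1+I*q3)/(q1-I*q2)) * ((I*q3-1)/(q1-I*q2))
      = q1 * ((1+I*q3)/(q1-I*q2) - (I*q3-1)/(q1-I*q2)) := by
  field_simp
  linear_combination (-1)*hq + (q2^2 - q3^2)*Complex.I_sq

private lemma surj_c2 (q1 q2 q3 : ℂ) (hq : q1^2+q2^2-q3^2 = 1) (ht : q1 - I*q2 ≠ 0) :
    I * (1 + ((1+I*q3)/(q1-I*q2)) * ((I*q3-1)/(q1-I*q2)))
      = q2 * ((1+I*q3)/(q1-I*q2) - (I*q3-1)/(q1-I*q2)) := by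
  field_simp
  linear_combination I*hq + (-2*q1*q2 + I*q2^2 + I*q3^2)*Complex.I_sq

private lemma surj_c3 (q1 q2 q3 : ℂ) (hq : q1^2+q2^2-q3^2 = 1) (ht : q1 - I*q2 ≠ 0) :
    -I * (((1+I*q3)/(q1-I*q2)) + ((I*q3-1)/(q1-I*q2)))
      = q3 * ((1+I*q3)/(q1-I*q2) - (I*q3-1)/(q1-I*q2)) := by
  field_simp
  linear_combination (-2*q3)*Complex.I_sq

/- ### Inequality lemmas -/

private lemma ineq_fwd (r s x y : ℝ) (hr0 : 0 ≤ r) (hs0 : 0 ≤ s) (hr : r < 1) (hs : s < 1)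
    (hx : -r ≤ x) (hy : -s ≤ y) :
    0 < 1 - r^2*s^2 + (1-s^2)*x + (1-r^2)*y := by
  nlinarith [mul_pos (mul_pos (sub_pos.2 hr) (sub_pos.2 hs)) (by nlinarith : (0:ℝ) < 1 - r*s),
    mul_nonneg (by nlinarith : (0:ℝ) ≤ 1 - s^2) (by linarith : (0:ℝ) ≤ x + r),
    mul_nonneg (by nlinarith : (0:ℝ) ≤ 1 - r^2) (by linarith : (0:ℝ) ≤ y + s)]

private lemma ineq_bwd (r s x y : ℝ) (hr0 : 0 ≤ r) (hs0 : 0 ≤ s) (hx : -r ≤ x) (hy : -s ≤ y)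
    (hp : 0 < (1-r^2)*(1-s^2)) (hT : 0 < 1 - r^2*s^2 + (1-s^2)*x + (1-r^2)*y) :
    r < 1 ∧ s < 1 := by
  rcases lt_trichotomy r 1 with h | h | h
  · refine ⟨h, ?_⟩
    by_contra hs
    push_neg at hs
    have h1 : (0:ℝ) < 1 - r^2 := by nlinarith
    have h2 : 1 - s^2 ≤ 0 := by nlinarith
    nlinarith [mul_nonpos_of_nonneg_of_nonpos (le_of_lt h1) h2]
  · exfalso; rw [h] at hp; simp at hp
  · exfalso
    have hss : 1 - s^2 < 0 := by
      by_contra hcon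
      push_neg at hcon
      nlinarith [mul_nonneg hcon (show (0:ℝ) ≤ r^2-1 by nlinarith)]
    have hs1 : 1 < s := by nlinarith
    nlinarith [mul_nonneg (by nlinarith : (0:ℝ) ≤ s^2 - 1) (by linarith : (0:ℝ) ≤ x + r),
      mul_nonneg (by nlinarith : (0:ℝ) ≤ r^2 - 1) (by linarith : (0:ℝ) ≤ y + s),
      mul_pos (mul_pos (by linarith : (0:ℝ) < r - 1) (by linarith : (0:ℝ) < s - 1))
        (by nlinarith : (0:ℝ) < r*s - 1)]

private lemma t_ne (q1 q2 q3 : ℂ)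
    (h1 : 1 < ‖q1‖^2 + ‖q2‖^2 - ‖q3‖^2)
    (h2 : q1^2+q2^2-q3^2=1)
    (h3 : 0 < (q2*((starRingEnd ℂ) q1 + (starRingEnd ℂ) q3)).im) :
    q1 - I*q2 ≠ 0 := by
  intro h
  have hq1 : q1 = I*q2 := by linear_combination h
  have hq3 : (q3 - I) * (q3 + I) = 0 := by
    linear_combination -h2 + hq1*(q1 + I*q2) + (q2^2-1)*Complex.I_sq
  have habs : ‖q1‖ = ‖q2‖ := by rw [hq1, norm_mul, Complex.norm_I, one_mul]
  have habs3 : ‖q3‖ = 1 := by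
    rcases mul_eq_zero.1 hq3 with h' | h'
    · have hq3' : q3 = I := by linear_combination h'
      rw [hq3', Complex.norm_I]
    · have hq3' : q3 = -I := by linear_combination h'
      rw [hq3']; simp
  have hn : 1 < normSq q2 := by
    rw [habs, habs3] at h1
    rw [← Complex.sq_norm]
    nlinarith
  have hre : q2.re^2 ≤ normSq q2 := by rw [normSq_apply]; nlinarith [sq_nonneg q2.im]
  rcases mul_eq_zero.1 hq3 with h' | h'
  · have hq3' : q3 = I := by linear_combination h'
    rw [hq1, hq3'] at h3
    simp [Complex.mul_im, Complex.mul_re, Complex.add_im, Complex.add_re,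
      Complex.conj_re, Complex.conj_im, Complex.I_re, Complex.I_im] at h3
    rw [normSq_apply] at hn
    nlinarith
  · have hq3' : q3 = -I := by linear_combination h'
    rw [hq1, hq3'] at h3
    simp [Complex.mul_im, Complex.mul_re, Complex.add_im, Complex.add_re,
      Complex.conj_re, Complex.conj_im, Complex.I_re, Complex.I_im] at h3
    rw [normSq_apply] at hn
    nlinarith

/- ### Membership characterization -/

private lemma mem_iff (z w : ℂ) (hzw : z ≠ w) :
    Hmap z w ∈ D2OneInfty ↔ ‖z‖ < 1 ∧ ‖w‖ < 1 := by
  have h0 : z - w ≠ 0 := sub_ne_zero.2 hzw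
  have hd : 0 < normSq (z-w) := normSq_pos.2 h0
  -- condition 1 rewritten
  have e1 : ‖(Hmap z w).1‖ ^ 2 + ‖(Hmap z w).2.1‖ ^ 2
      - ‖(Hmap z w).2.2‖ ^ 2
      = (normSq (1-z*w) + normSq (1+z*w) - normSq (z+w)) / normSq (z-w) := by
    show ‖(1-z*w)/(z-w)‖ ^ 2 + ‖I*(1+z*w)/(z-w)‖ ^ 2
        - ‖-I*(z+w)/(z-w)‖ ^ 2 = _
    rw [abs1_sq, abs2_sq, abs3_sq]; ring
  have hc1 : (1 < ‖(Hmap z w).1‖ ^ 2 + ‖(Hmap z w).2.1‖ ^ 2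
      - ‖(Hmap z w).2.2‖ ^ 2)
      ↔ 0 < (1 - normSq z)*(1 - normSq w) := by
    rw [e1, lt_div_iff₀ hd]
    constructor
    · intro h; nlinarith [normSq_key z w]
    · intro h; nlinarith [normSq_key z w]
  -- condition 3 rewritten
  have e3 : ((Hmap z w).2.1 * ((starRingEnd ℂ) (Hmap z w).1 + (starRingEnd ℂ) (Hmap z w).2.2)).im
      = (1 - normSq z * normSq w + (1 - normSq w)*z.im + (1 - normSq z)*w.im) / normSq (z-w) := by
    rw [prod_eq_N_div z w hzw, Complex.div_ofReal_im, imN_key]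
  have hc3 : (0 < ((Hmap z w).2.1 * ((starRingEnd ℂ) (Hmap z w).1
        + (starRingEnd ℂ) (Hmap z w).2.2)).im)
      ↔ 0 < 1 - normSq z * normSq w + (1 - normSq w)*z.im + (1 - normSq z)*w.im := by
    rw [e3]
    exact div_pos_iff_of_pos_right hd
  have him_z : -(‖z‖) ≤ z.im := (abs_le.1 (Complex.abs_im_le_norm z)).1
  have him_w : -(‖w‖) ≤ w.im := (abs_le.1 (Complex.abs_im_le_norm w)).1
  have hsqz : normSq z = ‖z‖ ^ 2 := (Complex.sq_norm z).symm
  have hsqw : normSq w = ‖w‖ ^ 2 := (Complex.sq_norm w).symm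
  constructor
  · rintro ⟨h1, _, h3⟩
    rw [hc1] at h1
    rw [hc3] at h3
    rw [hsqz, hsqw] at h1 h3
    exact ineq_bwd _ _ _ _ (norm_nonneg z) (norm_nonneg w) him_z him_w h1 h3
  · rintro ⟨hz, hw⟩
    refine ⟨?_, quadric_eq z w h0, ?_⟩
    · rw [hc1, hsqz, hsqw]
      have p1 : (0:ℝ) < 1 - ‖z‖ ^ 2 := by nlinarith [norm_nonneg z]
      have p2 : (0:ℝ) < 1 - ‖w‖ ^ 2 := by nlinarith [norm_nonneg w]
      exact mul_pos p1 p2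
    · rw [hc3, hsqz, hsqw]
      exact ineq_fwd _ _ _ _ (norm_nonneg z) (norm_nonneg w) hz hw him_z him_w

private lemma recover_fst (z w : ℂ) (hzw : z ≠ w) :
    (1 + I * (Hmap z w).2.2) / ((Hmap z w).1 - I * (Hmap z w).2.1) = z := by
  have h0 : z - w ≠ 0 := sub_ne_zero.2 hzw
  show (1 + I * (-I*(z+w)/(z-w))) / ((1-z*w)/(z-w) - I * (I*(1+z*w)/(z-w))) = z
  rw [denom_rec z w h0]
  exact rec_fst z w h0

private lemma recover_snd (z w : ℂ) (hzw : z ≠ w) :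
    (I * (Hmap z w).2.2 - 1) / ((Hmap z w).1 - I * (Hmap z w).2.1) = w := by
  have h0 : z - w ≠ 0 := sub_ne_zero.2 hzw
  show (I * (-I*(z+w)/(z-w)) - 1) / ((1-z*w)/(z-w) - I * (I*(1+z*w)/(z-w))) = w
  rw [denom_rec z w h0]
  exact rec_snd z w h0

/-- `H` is a bijection from `D² ∖ Δ` onto `D^{(2)}_{1,∞}`. -/
theorem Hmap_bijection :
    Set.InjOn (fun p : ℂ × ℂ => Hmap p.1 p.2) biDiscOffDiag ∧
    (fun p : ℂ × ℂ => Hmap p.1 p.2) '' biDiscOffDiag = D2OneInfty := by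
  constructor
  · intro p hp q hq heq
    simp only at heq
    have hp3 : p.1 ≠ p.2 := hp.2.2
    have hq3 : q.1 ≠ q.2 := hq.2.2
    have e1 : p.1 = q.1 := by
      rw [← recover_fst p.1 p.2 hp3, ← recover_fst q.1 q.2 hq3, heq]
    have e2 : p.2 = q.2 := by
      rw [← recover_snd p.1 p.2 hp3, ← recover_snd q.1 q.2 hq3, heq]
    exact Prod.ext e1 e2
  · ext q
    constructor
    · rintro ⟨p, hp, rfl⟩
      exact (mem_iff p.1 p.2 hp.2.2).2 ⟨hp.1, hp.2.1⟩
    · intro hq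
      obtain ⟨h1, h2, h3⟩ := hq
      have ht : q.1 - I * q.2.1 ≠ 0 := t_ne q.1 q.2.1 q.2.2 h1 h2 h3
      set z : ℂ := (1 + I*q.2.2)/(q.1 - I*q.2.1) with hz
      set w : ℂ := (I*q.2.2 - 1)/(q.1 - I*q.2.1) with hw
      have hsub : z - w = 2/(q.1 - I*q.2.1) := by
        rw [hz, hw, div_sub_div_same]; congr 1; ring
      have hzw : z ≠ w := by
        intro hcontra
        rw [sub_eq_zero.2 hcontra] at hsub
        have : (2:ℂ)/(q.1 - I*q.2.1) ≠ 0 := div_ne_zero two_ne_zero ht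
        exact this hsub.symm
      have h0 : z - w ≠ 0 := sub_ne_zero.2 hzw
      have hH : Hmap z w = q := by
        have c1 : (1 - z*w)/(z-w) = q.1 := by
          rw [div_eq_iff h0]
          exact surj_c1 q.1 q.2.1 q.2.2 h2 ht
        have c2 : I*(1 + z*w)/(z-w) = q.2.1 := by
          rw [div_eq_iff h0]
          exact surj_c2 q.1 q.2.1 q.2.2 h2 ht
        have c3 : -I*(z + w)/(z-w) = q.2.2 := by
          rw [div_eq_iff h0]
          exact surj_c3 q.1 q.2.1 q.2.2 h2 ht
        show ((1 - z*w)/(z-w), I*(1+z*w)/(z-w), -I*(z+w)/(z-w)) = q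
        rw [c1, c2, c3]
      have hmem : ‖z‖ < 1 ∧ ‖w‖ < 1 := by
        apply (mem_iff z w hzw).1
        rw [hH]
        exact ⟨h1, h2, h3⟩
      exact ⟨(z, w), ⟨hmem.1, hmem.2, hzw⟩, hH⟩
end

section
/- For every a ∈ (0,1), the map H carries the set F_a = {(z₁,z₂) ∈ D² : ρ(z₁,z₂) = a} onto the set η^{(2)}_α, where α = 8/a⁴ − 8/a² + 1; that is, H(F_a) = η^{(2)}_α. -/
/-- The orbit `F_a = {(z₁,z₂) ∈ D² : ρ(z₁,z₂) = a}`. -/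
def Fset (a : ℝ) : Set (ℂ × ℂ) :=
  {p | ‖p.1‖ < 1 ∧ ‖p.2‖ < 1 ∧ rho p.1 p.2 = a}

/-- The hypersurface `η^{(2)}_α`. -/
noncomputable def eta (α : ℝ) : Set (ℂ × ℂ × ℂ) :=
  {q | q.1 ^ 2 + q.2.1 ^ 2 - q.2.2 ^ 2 = 1 ∧
       0 < (q.2.1 * ((starRingEnd ℂ) q.1 + (starRingEnd ℂ) q.2.2)).im ∧
       ‖q.1‖ ^ 2 + ‖q.2.1‖ ^ 2 - ‖q.2.2‖ ^ 2 =
         Real.sqrt ((α + 1) / 2)}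

section Aux
open Complex

lemma normSq_key1 (z w : ℂ) :
    normSq (1 - z*w) + normSq (1 + z*w) - normSq (z + w)
      = (1 - normSq z) * (1 - normSq w) + normSq (1 - (starRingEnd ℂ) z * w) := by
  simp only [normSq_apply, mul_re, mul_im, sub_re, sub_im, add_re, add_im, one_re, one_im,
    conj_re, conj_im]
  ring

lemma normSq_key2 (z w : ℂ) :
    normSq (1 - (starRingEnd ℂ) z * w) = (1 - normSq z)*(1 - normSq w) + normSq (z - w) := by
  simp only [normSq_apply, mul_re, mul_im, sub_re, sub_im, add_re, add_im, one_re, one_im,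
    conj_re, conj_im]
  ring

lemma im_key (z w : ℂ) :
    (Complex.I * (1 + z*w) * ((starRingEnd ℂ) (1 - z*w) + Complex.I * (starRingEnd ℂ) (z + w))).im
      = 1 - normSq z * normSq w + z.im * (1 - normSq w) + w.im * (1 - normSq z) := by
  simp only [normSq_apply, mul_re, mul_im, sub_re, sub_im, add_re, add_im, one_re, one_im,
    conj_re, conj_im, I_re, I_im]
  ring

lemma pos_aux {p q x y : ℝ} (hp : p < 1) (hq : q < 1) (hx : x^2 ≤ p) (hy : y^2 ≤ q) :
    0 < 1 - p*q + x*(1-q) + y*(1-p) := by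
  have hp0 : 0 ≤ p := le_trans (sq_nonneg x) hx
  have hq0 : 0 ≤ q := le_trans (sq_nonneg y) hy
  set r := Real.sqrt p with hr
  set s := Real.sqrt q with hs
  have hr2 : r^2 = p := Real.sq_sqrt hp0
  have hs2 : s^2 = q := Real.sq_sqrt hq0
  have hr0 : 0 ≤ r := Real.sqrt_nonneg p
  have hs0 : 0 ≤ s := Real.sqrt_nonneg q
  have hr1 : r < 1 := by nlinarith
  have hs1 : s < 1 := by nlinarith
  have hxr : -r ≤ x := by nlinarith
  have hys : -s ≤ y := by nlinarith
  have key : 0 < (1-r)*(1-s)*(1-r*s) :=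
    mul_pos (mul_pos (by linarith) (by linarith)) (by nlinarith)
  rw [← hr2, ← hs2]
  nlinarith [mul_nonneg (by linarith : (0:ℝ) ≤ x + r) (by nlinarith : (0:ℝ) ≤ 1 - s^2),
    mul_nonneg (by linarith : (0:ℝ) ≤ y + s) (by nlinarith : (0:ℝ) ≤ 1 - r^2)]

lemma neg_aux {p q x y : ℝ} (hp : 1 < p) (hq : 1 < q) (hx : x^2 ≤ p) (hy : y^2 ≤ q) :
    1 - p*q + x*(1-q) + y*(1-p) < 0 := by
  have hp0 : 0 ≤ p := by linarith
  have hq0 : 0 ≤ q := by linarith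
  set r := Real.sqrt p with hr
  set s := Real.sqrt q with hs
  have hr2 : r^2 = p := Real.sq_sqrt hp0
  have hs2 : s^2 = q := Real.sq_sqrt hq0
  have hr0 : 0 ≤ r := Real.sqrt_nonneg p
  have hs0 : 0 ≤ s := Real.sqrt_nonneg q
  have hr1 : 1 < r := by nlinarith
  have hs1 : 1 < s := by nlinarith
  have hxr : -r ≤ x := by nlinarith
  have hys : -s ≤ y := by nlinarith
  have key : 0 < (r-1)*(s-1)*(r*s-1) :=
    mul_pos (mul_pos (by linarith) (by linarith)) (by nlinarith)
  rw [← hr2, ← hs2]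
  nlinarith [mul_nonneg (by linarith : (0:ℝ) ≤ x + r) (by nlinarith : (0:ℝ) ≤ s^2 - 1),
    mul_nonneg (by linarith : (0:ℝ) ≤ y + s) (by nlinarith : (0:ℝ) ≤ r^2 - 1)]

lemma ht_eq (z w : ℂ) (hd : z - w ≠ 0) :
    (Hmap z w).2.1 * ((starRingEnd ℂ) (Hmap z w).1 + (starRingEnd ℂ) (Hmap z w).2.2)
      = (Complex.I * (1 + z*w) * ((starRingEnd ℂ) (1 - z*w) + Complex.I * (starRingEnd ℂ) (z + w)))
        / ((normSq (z - w) : ℝ) : ℂ) := by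
  have hc : (starRingEnd ℂ) (z - w) ≠ 0 := star_ne_zero.mpr hd
  have hn : ((normSq (z-w) : ℝ) : ℂ) = (z-w) * (starRingEnd ℂ) (z-w) := (Complex.mul_conj _).symm
  rw [hn]
  simp only [Hmap, map_div₀, map_mul, map_sub, map_add, map_one, Complex.conj_I, map_neg]
  field_simp

lemma im_part (z w : ℂ) (hd : z - w ≠ 0) :
    ((Hmap z w).2.1 * ((starRingEnd ℂ) (Hmap z w).1 + (starRingEnd ℂ) (Hmap z w).2.2)).im
      = (1 - normSq z * normSq w + z.im * (1 - normSq w) + w.im * (1 - normSq z))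
        / normSq (z - w) := by
  rw [ht_eq z w hd, Complex.div_ofReal_im, im_key]

lemma abs_part (z w : ℂ) (hd : z - w ≠ 0) :
    ‖(Hmap z w).1‖ ^ 2 + ‖(Hmap z w).2.1‖ ^ 2
      - ‖(Hmap z w).2.2‖ ^ 2
      = ((1 - normSq z) * (1 - normSq w) + normSq (1 - (starRingEnd ℂ) z * w))
        / normSq (z - w) := by
  have h0 : normSq (z - w) ≠ 0 := (normSq_pos.mpr hd).ne'
  simp only [Hmap, norm_div, norm_mul, Complex.norm_I, one_mul, div_pow, Complex.sq_norm,
    norm_neg, neg_mul, normSq_neg, normSq_I]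
  rw [← add_div, ← sub_div, normSq_key1]

lemma quad_part (z w : ℂ) (hd : z - w ≠ 0) :
    (Hmap z w).1 ^ 2 + (Hmap z w).2.1 ^ 2 - (Hmap z w).2.2 ^ 2 = 1 := by
  simp only [Hmap]
  field_simp
  linear_combination (z^2*w^2 - z^2 - w^2 + 1) * Complex.I_sq

lemma sqrt_alpha {a : ℝ} (ha0 : 0 < a) (ha1 : a < 1) :
    Real.sqrt ((8 / a ^ 4 - 8 / a ^ 2 + 1 + 1) / 2) = 2 / a ^ 2 - 1 := by
  have hne : a ≠ 0 := ne_of_gt ha0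
  have h1 : (8 / a ^ 4 - 8 / a ^ 2 + 1 + 1) / 2 = (2 / a ^ 2 - 1) ^ 2 := by
    field_simp
    ring
  have h2 : (0:ℝ) ≤ 2 / a ^ 2 - 1 := by
    have ha2 : 0 < a ^ 2 := by positivity
    rw [sub_nonneg, le_div_iff₀ ha2]
    nlinarith
  rw [h1, Real.sqrt_sq h2]

lemma rho_sq (z w : ℂ) : rho z w ^ 2 = normSq (z - w) / normSq (1 - (starRingEnd ℂ) z * w) := by
  rw [rho, Complex.sq_norm, map_div₀]

lemma im_sq_le_normSq (z : ℂ) : z.im ^ 2 ≤ normSq z := by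
  simp only [normSq_apply]; nlinarith [sq_nonneg z.re]

end Aux

set_option maxHeartbeats 1000000 in
/-- For every `a ∈ (0,1)`, `H` maps `F_a` onto `η^{(2)}_α` where
`α = 8/a⁴ − 8/a² + 1`. -/
theorem Hmap_image_Fset (a : ℝ) (ha : a ∈ Set.Ioo (0 : ℝ) 1) :
    (fun p : ℂ × ℂ => Hmap p.1 p.2) '' Fset a =
      eta (8 / a ^ 4 - 8 / a ^ 2 + 1) := by
  obtain ⟨ha0, ha1⟩ := ha
  have hane : a ≠ 0 := ne_of_gt ha0
  have ha2 : (0:ℝ) < a ^ 2 := by positivity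
  have hsqrt := sqrt_alpha ha0 ha1
  have hc1 : 1 < 2 / a ^ 2 - 1 := by
    rw [lt_sub_iff_add_lt, lt_div_iff₀ ha2]
    nlinarith
  ext q
  simp only [Set.mem_image, Fset, eta, Set.mem_setOf_eq]
  constructor
  · rintro ⟨⟨z, w⟩, ⟨hz, hw, hr⟩, rfl⟩
    simp only at hz hw hr ⊢
    have hd : z - w ≠ 0 := by
      intro h
      rw [rho, h] at hr
      simp at hr
      exact absurd hr.symm (ne_of_gt ha0)
    have hD2 : 0 < Complex.normSq (z - w) := Complex.normSq_pos.mpr hd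
    have hnz : Complex.normSq z < 1 := by
      rw [← Complex.sq_norm]; nlinarith [norm_nonneg z]
    have hnw : Complex.normSq w < 1 := by
      rw [← Complex.sq_norm]; nlinarith [norm_nonneg w]
    set P := (1 - Complex.normSq z) * (1 - Complex.normSq w) with hP
    have hPpos : 0 < P := mul_pos (by linarith) (by linarith)
    have hden : Complex.normSq (1 - (starRingEnd ℂ) z * w) = P + Complex.normSq (z - w) :=
      normSq_key2 z w
    have hPD : 0 < P + Complex.normSq (z - w) := by linarith
    have hrs : a ^ 2 * (P + Complex.normSq (z - w)) = Complex.normSq (z - w) := by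
      have h := rho_sq z w
      rw [hr, hden] at h
      rw [h]
      field_simp
    refine ⟨quad_part z w hd, ?_, ?_⟩
    · rw [im_part z w hd]
      exact div_pos (pos_aux hnz hnw (im_sq_le_normSq z) (im_sq_le_normSq w)) hD2
    · rw [abs_part z w hd, hsqrt, hden, div_eq_iff hD2.ne']
      have : a ^ 2 * P = (1 - a^2) * Complex.normSq (z - w) := by nlinarith [hrs]
      have hinv : (2 / a ^ 2 - 1) * a^2 = 2 - a^2 := by field_simp
      nlinarith [this, hinv]
  · rintro ⟨h1, h2, h3⟩
    obtain ⟨q1, q2, q3⟩ := q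
    simp only at h1 h2 h3 ⊢
    rw [hsqrt] at h3
    have hu : q1 - Complex.I * q2 ≠ 0 := by
      intro h
      have hq1 : q1 = Complex.I * q2 := by linear_combination h
      have hq3 : q3 ^ 2 = -1 := by
        linear_combination -h1 + (q1 + Complex.I * q2) * h + q2^2 * Complex.I_sq
      have habs3 : ‖q3‖ = 1 := by
        have h' : ‖q3‖ ^ 2 = 1 := by
          rw [← norm_pow, hq3]
          simp
        nlinarith [norm_nonneg q3]
      have habs1 : ‖q1‖ = ‖q2‖ := by
        rw [hq1, norm_mul, Complex.norm_I, one_mul]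
      have hq2big : 1 < ‖q2‖ := by
        rw [habs1, habs3] at h3
        nlinarith [norm_nonneg q2]
      have him : (q2 * ((starRingEnd ℂ) q1 + (starRingEnd ℂ) q3)).im
          = -Complex.normSq q2 + (q2 * (starRingEnd ℂ) q3).im := by
        rw [hq1]
        simp only [map_mul, Complex.conj_I, mul_add]
        rw [Complex.add_im]
        congr 1
        have he : q2 * (-Complex.I * (starRingEnd ℂ) q2) = -Complex.I * (Complex.normSq q2 : ℂ) := by
          rw [show q2 * (-Complex.I * (starRingEnd ℂ) q2)
                = -Complex.I * (q2 * (starRingEnd ℂ) q2) by ring, Complex.mul_conj]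
        rw [he]
        simp
      have hb : (q2 * (starRingEnd ℂ) q3).im ≤ ‖q2‖ := by
        calc (q2 * (starRingEnd ℂ) q3).im ≤ ‖q2 * (starRingEnd ℂ) q3‖ :=
              Complex.im_le_norm _
          _ = ‖q2‖ * ‖q3‖ := by rw [norm_mul, Complex.norm_conj]
          _ = ‖q2‖ := by rw [habs3, mul_one]
      rw [him] at h2
      have hnq2 : Complex.normSq q2 = ‖q2‖ ^ 2 := (Complex.sq_norm q2).symm
      nlinarith [h2]
    set d : ℂ := 2 / (q1 - Complex.I * q2) with hddef
    have hd0 : d ≠ 0 := div_ne_zero two_ne_zero hu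
    set z : ℂ := (Complex.I * q3 * d + d) / 2 with hzdef
    set w : ℂ := (Complex.I * q3 * d - d) / 2 with hwdef
    have hzw : z - w = d := by rw [hzdef, hwdef]; ring
    have hdne : z - w ≠ 0 := by rw [hzw]; exact hd0
    have hH : Hmap z w = (q1, q2, q3) := by
      simp only [Hmap, hzw]
      have hI3 : Complex.I ^ 3 = -Complex.I := by linear_combination Complex.I * Complex.I_sq
      have hI4 : Complex.I ^ 4 = 1 := by linear_combination (Complex.I ^ 2 - 1) * Complex.I_sq
      have e1 : (1 - z * w) / d = q1 := by
        rw [hzdef, hwdef, hddef]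
        field_simp
        linear_combination (-4*(q1 - Complex.I*q2)) * h1 +
          (4*(q1*q2^2 - q1*q3^2 + Complex.I*q2*q3^2 - Complex.I*q2^3)) * Complex.I_sq +
          (4*q1 - 4*Complex.I*q2 - 1) * h1 +
          (-4*q1*q2^2 + 4*q1*q3^2 + q2^2 - q3^2) * Complex.I_sq +
          (-4*q2*q3^2 + 4*q2^3) * hI3
      have e2 : Complex.I * (1 + z * w) / d = q2 := by
        rw [hzdef, hwdef, hddef]
        field_simp
        linear_combination (4*(Complex.I*q1 + q2)) * h1 +
          (-12*q1^2*q2 + 4*q2 - 8*q2^3 + Complex.I*(12*q1*q2^2 + 4*q1*q3^2) +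
            (Complex.I^2 - 1)*(-4*q2*q3^2 - 4*q2^3)) * Complex.I_sq +
          (-4*q2 + Complex.I - 4*Complex.I*q1) * h1 +
          (-2*q1*q2 + 12*q1^2*q2 - 4*q2 + 8*q2^3) * Complex.I_sq +
          (-12*q1*q2^2 - 4*q1*q3^2 + q2^2 + q3^2) * hI3 +
          (4*q2*q3^2 + 4*q2^3) * hI4
      have e3 : -Complex.I * (z + w) / d = q3 := by
        rw [hzdef, hwdef, hddef]
        field_simp
        linear_combination (4*q3*(Complex.I*q2 - q1)) * Complex.I_sq +
          (-2*q3 + 4*q1*q3) * Complex.I_sq + (-4*q2*q3) * hI3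
      rw [e1, e2, e3]
    have hD2 : 0 < Complex.normSq (z - w) := Complex.normSq_pos.mpr hdne
    set P := (1 - Complex.normSq z) * (1 - Complex.normSq w) with hP
    have habs := abs_part z w hdne
    rw [hH] at habs
    have hden : Complex.normSq (1 - (starRingEnd ℂ) z * w) = P + Complex.normSq (z - w) :=
      normSq_key2 z w
    have hPval : 2 * P * a^2 = (2 - 2*a^2) * Complex.normSq (z - w) := by
      rw [h3, hden, eq_div_iff hD2.ne', ← hP] at habs
      field_simp at habs
      nlinarith [habs]
    have hPpos : 0 < P := by
      have h2a : (0:ℝ) < 2 - 2*a^2 := by nlinarith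
      nlinarith [hPval, mul_pos h2a hD2, ha2]
    have him := im_part z w hdne
    rw [hH] at him
    rw [him] at h2
    have hNim : 0 < 1 - Complex.normSq z * Complex.normSq w
        + z.im * (1 - Complex.normSq w) + w.im * (1 - Complex.normSq z) := by
      rcases div_pos_iff.mp h2 with ⟨h, _⟩ | ⟨_, h⟩
      · exact h
      · linarith
    have hnz : Complex.normSq z < 1 := by
      by_contra hle
      push_neg at hle
      have hgt : 1 < Complex.normSq z := by
        rcases lt_or_eq_of_le hle with h | h
        · exact h
        · exfalso
          rw [hP, ← h] at hPpos
          simp at hPpos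
      have hnw1 : 1 < Complex.normSq w := by nlinarith
      linarith [neg_aux hgt hnw1 (im_sq_le_normSq z) (im_sq_le_normSq w)]
    have hnw : Complex.normSq w < 1 := by nlinarith
    refine ⟨(z, w), ⟨?_, ?_, ?_⟩, by simp [hH]⟩
    · have : ‖z‖ ^ 2 < 1 := by rw [Complex.sq_norm]; exact hnz
      nlinarith [norm_nonneg z]
    · have : ‖w‖ ^ 2 < 1 := by rw [Complex.sq_norm]; exact hnw
      nlinarith [norm_nonneg w]
    · have hkey : a^2 * (P + Complex.normSq (z - w)) = Complex.normSq (z - w) := by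
        nlinarith [hPval]
      have hrho2 : rho z w ^ 2 = a ^ 2 := by
        rw [rho_sq, hden, div_eq_iff (by linarith : P + Complex.normSq (z - w) ≠ 0)]
        nlinarith [hkey]
      have h0 : 0 ≤ rho z w := norm_nonneg _
      calc rho z w = Real.sqrt (rho z w ^ 2) := (Real.sqrt_sq h0).symm
        _ = Real.sqrt (a ^ 2) := by rw [hrho2]
        _ = a := Real.sqrt_sq ha0.le
end

section
/- For every holomorphic automorphism φ of the open unit disc D (i.e., every holomorphic bijection of D whose inverse is holomorphic), there exists a real 3×3 matrix A with Aᵗ·I_{2,1}·A = I_{2,1} and det A = 1 (i.e., A ∈ SO(2,1)) such that for all z, w ∈ D with z ≠ w, H(φ(z), φ(w)) = A · H(z,w), where A acts on ℂ³ as a linear map. -/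
/-- `H(z,w)` as a vector in `ℂ³ = Fin 3 → ℂ`. -/
noncomputable def Hvec (z w : ℂ) : Fin 3 → ℂ :=
  ![(1 - z * w) / (z - w), Complex.I * (1 + z * w) / (z - w),
    -Complex.I * (z + w) / (z - w)]

/-- The matrix `I_{2,1} = diag(1,1,−1)`. -/
def I21 : Matrix (Fin 3) (Fin 3) ℝ := Matrix.diagonal ![1, 1, -1]

open ComplexConjugate Metric Set

noncomputable def matA (a b : ℂ) : Matrix (Fin 3) (Fin 3) ℝ :=
  !![(a^2).re - (b^2).re, -((a^2).im + (b^2).im), 2*(a*b).im;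
     (a^2).im - (b^2).im, (a^2).re + (b^2).re, -(2*(a*b).re);
     -(2*(a*conj b).im), -(2*(a*conj b).re), Complex.normSq a + Complex.normSq b]

lemma matA_orth (a b : ℂ) (hs : Complex.normSq a - Complex.normSq b = 1) :
    (matA a b).transpose * I21 * (matA a b) = I21 := by
  have hs' : a.re*a.re + a.im*a.im - (b.re*b.re + b.im*b.im) = 1 := by
    simpa [Complex.normSq_apply] using hs
  ext i j
  fin_cases i <;> fin_cases j <;>
    simp [matA, I21, Matrix.mul_apply, Fin.sum_univ_three, Matrix.diagonal, Matrix.transpose_apply, Matrix.vecHead, Matrix.vecTail,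
      Complex.normSq_apply, pow_two, Complex.mul_re, Complex.mul_im,
      Complex.conj_re, Complex.conj_im] <;>
    first
      | ring1
      | (linear_combination (a.re*a.re + a.im*a.im - b.re*b.re - b.im*b.im + 1) * hs')
      | (linear_combination (-(a.re*a.re + a.im*a.im - b.re*b.re - b.im*b.im) - 1) * hs')

lemma matA_det (a b : ℂ) (hs : Complex.normSq a - Complex.normSq b = 1) :
    (matA a b).det = 1 := by
  have hs' : a.re*a.re + a.im*a.im - (b.re*b.re + b.im*b.im) = 1 := by
    simpa [Complex.normSq_apply] using hs
  rw [Matrix.det_fin_three]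
  simp [matA, Complex.normSq_apply, pow_two, Complex.mul_re, Complex.mul_im,
    Complex.conj_re, Complex.conj_im]
  linear_combination ((a.re*a.re + a.im*a.im - b.re*b.re - b.im*b.im)^2
    + (a.re*a.re + a.im*a.im - b.re*b.re - b.im*b.im) + 1) * hs'

lemma key (a b z w : ℂ) (h1 : a * conj a - b * conj b = 1)
    (hD1 : conj b * z + conj a ≠ 0) (hD2 : conj b * w + conj a ≠ 0)
    (hzw : z - w ≠ 0) :
    Hvec ((a*z+b)/(conj b * z + conj a)) ((a*w+b)/(conj b * w + conj a))
      = ((matA a b).map (fun x => (x:ℂ))).mulVec (Hvec z w) := by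
  have hre : ∀ t : ℂ, ((t.re : ℝ) : ℂ) = (t + conj t)/2 := by
    intro t; rw [Complex.add_conj]; push_cast; ring
  have him : ∀ t : ℂ, ((t.im : ℝ) : ℂ) = (conj t - t) * Complex.I / 2 := by
    intro t
    rw [eq_div_iff (two_ne_zero (α := ℂ))]
    linear_combination (norm := (push_cast; ring)) Complex.I * Complex.sub_conj t + 2 * (t.im : ℂ) * Complex.I_sq
  have hns : ∀ t : ℂ, ((Complex.normSq t : ℝ) : ℂ) = t * conj t := fun t => (Complex.mul_conj t).symm
  have hnd : (a*z+b) * (conj b * w + conj a) - (conj b * z + conj a) * (a*w+b) = z - w := by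
    linear_combination (z - w) * h1
  have hsub : (a*z+b)/(conj b * z + conj a) - (a*w+b)/(conj b * w + conj a)
      = (z - w)/((conj b * z + conj a) * (conj b * w + conj a)) := by
    rw [div_sub_div _ _ hD1 hD2, hnd]
  funext i
  fin_cases i
  · -- component 0
    simp only [Hvec, matA, Matrix.mulVec, Matrix.map_apply, dotProduct,
      Fin.sum_univ_three, Matrix.cons_val', Matrix.cons_val_zero, Matrix.cons_val_one,
      Matrix.head_cons, Matrix.empty_val', Matrix.cons_val_fin_one, Matrix.head_fin_const,
      Matrix.cons_val_two, Matrix.tail_cons, Matrix.of_apply, Fin.mk_zero]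
    rw [hsub, div_div_eq_mul_div]
    have e0 : (1 - (a*z+b)/(conj b * z + conj a) * ((a*w+b)/(conj b * w + conj a)))
        * ((conj b * z + conj a) * (conj b * w + conj a))
        = (conj b * z + conj a) * (conj b * w + conj a) - (a*z+b)*(a*w+b) := by
      rw [div_mul_div_comm, sub_mul (1:ℂ), one_mul, div_mul_cancel₀ _ (mul_ne_zero hD1 hD2)]
    rw [e0]
    have numeq : (conj b * z + conj a) * (conj b * w + conj a) - (a*z+b)*(a*w+b)
        = (((a^2).re - (b^2).re : ℝ) : ℂ) * (1 - z*w)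
          + ((-((a^2).im + (b^2).im) : ℝ) : ℂ) * (Complex.I * (1 + z*w))
          + ((2*(a*b).im : ℝ) : ℂ) * (-Complex.I * (z + w)) := by
      push_cast
      simp only [hre, him, hns, map_pow, map_mul, Complex.conj_conj]
      linear_combination (((conj a)^2 - a^2 + (conj b)^2 - b^2)*(1+z*w)/2
        + (conj a * conj b - a*b)*(z+w)) * Complex.I_sq
    rw [numeq]
    try ring
  · -- component 1
    simp only [Hvec, matA, Matrix.mulVec, Matrix.map_apply, dotProduct,
      Fin.sum_univ_three, Matrix.cons_val', Matrix.cons_val_zero, Matrix.cons_val_one,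
      Matrix.head_cons, Matrix.empty_val', Matrix.cons_val_fin_one, Matrix.head_fin_const,
      Matrix.cons_val_two, Matrix.tail_cons, Matrix.of_apply, Fin.mk_one]
    rw [hsub, div_div_eq_mul_div]
    have e1 : Complex.I * (1 + (a*z+b)/(conj b * z + conj a) * ((a*w+b)/(conj b * w + conj a)))
        * ((conj b * z + conj a) * (conj b * w + conj a))
        = Complex.I * ((conj b * z + conj a) * (conj b * w + conj a) + (a*z+b)*(a*w+b)) := by
      rw [div_mul_div_comm, mul_assoc, add_mul (1:ℂ), one_mul, div_mul_cancel₀ _ (mul_ne_zero hD1 hD2)]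
      try ring
    rw [e1]
    have numeq : Complex.I * ((conj b * z + conj a) * (conj b * w + conj a) + (a*z+b)*(a*w+b))
        = (((a^2).im - (b^2).im : ℝ) : ℂ) * (1 - z*w)
          + (((a^2).re + (b^2).re : ℝ) : ℂ) * (Complex.I * (1 + z*w))
          + ((-(2*(a*b).re) : ℝ) : ℂ) * (-Complex.I * (z + w)) := by
      push_cast
      simp only [hre, him, hns, map_pow, map_mul, Complex.conj_conj]
      ring
    rw [numeq]
    try ring
  · -- component 2
    simp only [show (⟨2, by norm_num⟩ : Fin 3) = 2 from rfl]
    simp only [Hvec, matA, Matrix.mulVec, Matrix.map_apply, dotProduct,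
      Fin.sum_univ_three, Matrix.cons_val', Matrix.cons_val_zero, Matrix.cons_val_one,
      Matrix.head_cons, Matrix.empty_val', Matrix.cons_val_fin_one, Matrix.head_fin_const,
      Matrix.cons_val_two, Matrix.tail_cons, Matrix.of_apply]
    rw [hsub, div_div_eq_mul_div]
    have e2 : -Complex.I * ((a*z+b)/(conj b * z + conj a) + (a*w+b)/(conj b * w + conj a))
        * ((conj b * z + conj a) * (conj b * w + conj a))
        = -Complex.I * ((a*z+b)*(conj b * w + conj a) + (a*w+b)*(conj b * z + conj a)) := by
      rw [div_add_div _ _ hD1 hD2, mul_assoc, div_mul_cancel₀ _ (mul_ne_zero hD1 hD2)]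
      try ring
    rw [e2]
    have numeq : -Complex.I * ((a*z+b)*(conj b * w + conj a) + (a*w+b)*(conj b * z + conj a))
        = ((-(2*(a*conj b).im) : ℝ) : ℂ) * (1 - z*w)
          + ((-(2*(a*conj b).re) : ℝ) : ℂ) * (Complex.I * (1 + z*w))
          + ((Complex.normSq a + Complex.normSq b : ℝ) : ℂ) * (-Complex.I * (z + w)) := by
      push_cast
      simp only [hre, him, hns, map_pow, map_mul, Complex.conj_conj]
      ring
    rw [numeq]
    try ring

lemma mob_den {c x : ℂ} (hc : ‖c‖ < 1) (hx : ‖x‖ < 1) :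
    (1 : ℂ) - conj c * x ≠ 0 := by
  intro h
  have h1 : (1:ℂ) = conj c * x := sub_eq_zero.mp h
  have h2 : (1:ℝ) = ‖conj c * x‖ := by rw [← h1]; simp
  rw [norm_mul, Complex.norm_conj] at h2
  nlinarith [norm_nonneg c, norm_nonneg x]

lemma mob_mem {c x : ℂ} (hc : ‖c‖ < 1) (hx : ‖x‖ < 1) :
    ‖(x - c)/(1 - conj c * x)‖ < 1 := by
  have hne := mob_den hc hx
  have key : Complex.normSq (1 - conj c * x) - Complex.normSq (x - c)
      = (1 - Complex.normSq c) * (1 - Complex.normSq x) := by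
    simp [Complex.normSq_apply, Complex.sub_re, Complex.sub_im, Complex.mul_re,
      Complex.mul_im, Complex.conj_re, Complex.conj_im, Complex.one_re, Complex.one_im]
    ring
  have hc2 : Complex.normSq c < 1 := by
    rw [Complex.normSq_eq_norm_sq]; nlinarith [norm_nonneg c]
  have hx2 : Complex.normSq x < 1 := by
    rw [Complex.normSq_eq_norm_sq]; nlinarith [norm_nonneg x]
  have hlt : Complex.normSq (x - c) < Complex.normSq (1 - conj c * x) := by nlinarith
  rw [norm_div, div_lt_one (norm_pos_iff.mpr hne)]
  rw [Complex.norm_def, Complex.norm_def]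
  exact Real.sqrt_lt_sqrt (Complex.normSq_nonneg _) hlt

lemma mob_inv {c x : ℂ} (hc : ‖c‖ < 1) (hx : ‖x‖ < 1) :
    ((x - c)/(1 - conj c * x) + c) / (1 + conj c * ((x - c)/(1 - conj c * x))) = x := by
  have hne := mob_den hc hx
  have hc1 : (1:ℂ) - c * conj c ≠ 0 := by
    intro h
    have h1 : (1:ℂ) = c * conj c := sub_eq_zero.mp h
    rw [Complex.mul_conj] at h1
    have h2 : Complex.normSq c < 1 := by
      rw [Complex.normSq_eq_norm_sq]; nlinarith [norm_nonneg c]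
    have := congrArg Complex.re h1
    simp at this
    linarith
  have hnum : (x - c)/(1 - conj c * x) + c = x * (1 - c * conj c)/(1 - conj c * x) := by
    rw [div_add' _ _ _ hne]; congr 1; ring
  have hden : 1 + conj c * ((x - c)/(1 - conj c * x)) = (1 - c * conj c)/(1 - conj c * x) := by
    field_simp; ring
  have hgen : ∀ p q r : ℂ, q ≠ 0 → r ≠ 0 → (p*q/r)/(q/r) = p := by
    intro p q r hq hr; field_simp
  rw [hnum, hden]
  exact hgen x _ _ hc1 hne

/-- For every holomorphic automorphism `φ` of the unit disc there is a matrix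
`A ∈ SO(2,1)` such that `H(φ(z), φ(w)) = A · H(z,w)` for all `z ≠ w` in the disc. -/
theorem exists_SO21_of_discAut (φ ψ : ℂ → ℂ)
    (hφd : DifferentiableOn ℂ φ (Metric.ball (0 : ℂ) 1))
    (hφm : Set.MapsTo φ (Metric.ball (0 : ℂ) 1) (Metric.ball (0 : ℂ) 1))
    (hψd : DifferentiableOn ℂ ψ (Metric.ball (0 : ℂ) 1))
    (hψm : Set.MapsTo ψ (Metric.ball (0 : ℂ) 1) (Metric.ball (0 : ℂ) 1))
    (hlr : ∀ z ∈ Metric.ball (0 : ℂ) 1, ψ (φ z) = z)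
    (hrl : ∀ z ∈ Metric.ball (0 : ℂ) 1, φ (ψ z) = z) :
    ∃ A : Matrix (Fin 3) (Fin 3) ℝ,
      A.transpose * I21 * A = I21 ∧ A.det = 1 ∧
      ∀ z w : ℂ, z ∈ Metric.ball (0 : ℂ) 1 → w ∈ Metric.ball (0 : ℂ) 1 → z ≠ w →
        Hvec (φ z) (φ w) = (A.map (fun x => (x : ℂ))).mulVec (Hvec z w) := by
  have hball : ∀ x : ℂ, x ∈ Metric.ball (0:ℂ) 1 ↔ ‖x‖ < 1 := by
    intro x; rw [Metric.mem_ball, Complex.dist_eq, sub_zero]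
  have h0 : (0:ℂ) ∈ Metric.ball (0:ℂ) 1 := by
    rw [hball]; simp
  set c := φ 0 with hcdef
  have hφmem : ∀ z ∈ Metric.ball (0:ℂ) 1, ‖φ z‖ < 1 :=
    fun z hz => (hball _).mp (hφm hz)
  have hc : ‖c‖ < 1 := hφmem 0 h0
  set g : ℂ → ℂ := fun z => (φ z - c)/(1 - conj c * φ z) with hgdef
  have hmobdiff : DifferentiableOn ℂ (fun y => (y - c)/(1 - conj c * y)) (Metric.ball (0:ℂ) 1) := by
    apply DifferentiableOn.div
    · fun_prop
    · fun_prop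
    · intro y hy; exact mob_den hc ((hball y).mp hy)
  have hmobmaps : Set.MapsTo (fun y => (y - c)/(1 - conj c * y))
      (Metric.ball (0:ℂ) 1) (Metric.ball (0:ℂ) 1) :=
    fun y hy => (hball _).mpr (mob_mem hc ((hball y).mp hy))
  have hgdiff : DifferentiableOn ℂ g (Metric.ball (0:ℂ) 1) := hmobdiff.comp hφd hφm
  have hgmaps : Set.MapsTo g (Metric.ball (0:ℂ) 1) (Metric.ball (0:ℂ) 1) :=
    fun z hz => hmobmaps (hφm hz)
  have hg0 : g 0 = 0 := by simp [hgdef, ← hcdef]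
  set minv : ℂ → ℂ := fun y => (y + c)/(1 + conj c * y) with hminvdef
  have hcneg : ‖-c‖ < 1 := by rwa [norm_neg]
  have hminv_den : ∀ y : ℂ, ‖y‖ < 1 → (1:ℂ) + conj c * y ≠ 0 := by
    intro y hy
    have := mob_den (c := -c) (x := y) hcneg hy
    simpa [map_neg, sub_neg_eq_add] using this
  have hminv_mem : ∀ y : ℂ, ‖y‖ < 1 → ‖minv y‖ < 1 := by
    intro y hy
    have := mob_mem (c := -c) (x := y) hcneg hy
    simpa [hminvdef, map_neg, sub_neg_eq_add] using this
  have hminvdiff : DifferentiableOn ℂ minv (Metric.ball (0:ℂ) 1) := by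
    apply DifferentiableOn.div
    · fun_prop
    · fun_prop
    · intro y hy; exact hminv_den y ((hball y).mp hy)
  have hminvmaps : Set.MapsTo minv (Metric.ball (0:ℂ) 1) (Metric.ball (0:ℂ) 1) :=
    fun y hy => (hball _).mpr (hminv_mem y ((hball y).mp hy))
  set h : ℂ → ℂ := fun y => ψ (minv y) with hhdef
  have hhdiff : DifferentiableOn ℂ h (Metric.ball (0:ℂ) 1) := hψd.comp hminvdiff hminvmaps
  have hhmaps : Set.MapsTo h (Metric.ball (0:ℂ) 1) (Metric.ball (0:ℂ) 1) :=
    fun y hy => hψm (hminvmaps hy)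
  have hmg : ∀ z ∈ Metric.ball (0:ℂ) 1, minv (g z) = φ z := by
    intro z hz
    exact mob_inv hc (hφmem z hz)
  have hh0 : h 0 = 0 := by
    have h1 : minv 0 = c := by simp [hminvdef]
    show ψ (minv 0) = 0
    rw [h1, hcdef]
    exact hlr 0 h0
  have hhg : ∀ z ∈ Metric.ball (0:ℂ) 1, h (g z) = z := by
    intro z hz
    show ψ (minv (g z)) = z
    rw [hmg z hz]
    exact hlr z hz
  have habs_eq : ∀ z ∈ Metric.ball (0:ℂ) 1, ‖g z‖ = ‖z‖ := by
    intro z hz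
    have h1 : ‖g z‖ ≤ ‖z‖ :=
      Complex.norm_le_norm_of_mapsTo_ball hgdiff (hgmaps.mono_right ball_subset_closedBall) hg0 ((hball z).mp hz)
    have h2 : ‖z‖ ≤ ‖g z‖ := by
      have := Complex.norm_le_norm_of_mapsTo_ball hhdiff (hhmaps.mono_right ball_subset_closedBall) hh0
        ((hball _).mp (hgmaps hz))
      rwa [hhg z hz] at this
    exact le_antisymm h1 h2
  have habs₀ : ‖(1/2 : ℂ)‖ = 1/2 := by norm_num
  have hz₀ : (1/2 : ℂ) ∈ Metric.ball (0:ℂ) 1 := by rw [hball, habs₀]; norm_num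
  have hds : ‖dslope g 0 (1/2 : ℂ)‖ = 1 / 1 := by
    rw [dslope_of_ne _ (by norm_num : (1/2:ℂ) ≠ 0)]
    rw [slope_def_field]
    rw [hg0, sub_zero, sub_zero]
    rw [norm_div, habs_eq _ hz₀, habs₀]
    norm_num
  have hEq := Complex.affine_of_mapsTo_ball_of_exists_norm_dslope_eq_div hgdiff
    (by rw [hg0]; exact hgmaps.mono_right ball_subset_closedBall) hz₀ hds
  set C := dslope g 0 (1/2:ℂ) with hCdef
  have hgC : ∀ z ∈ Metric.ball (0:ℂ) 1, g z = z * C := by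
    intro z hz
    have := hEq hz
    simpa [hg0, smul_eq_mul] using this
  have habsC : ‖C‖ = 1 := by
    have := hds
    simpa using this
  obtain ⟨μ, hμ⟩ := IsAlgClosed.exists_pow_nat_eq C (n := 2) (by norm_num)
  have hμabs : ‖μ‖ = 1 := by
    have h2 : ‖μ‖ ^ 2 = 1 := by rw [← norm_pow, hμ, habsC]
    nlinarith [norm_nonneg μ]
  have hμ1 : Complex.normSq μ = 1 := by
    rw [Complex.normSq_eq_norm_sq, hμabs]; norm_num
  have hμc : μ * conj μ = 1 := by
    rw [Complex.mul_conj, hμ1]; norm_num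
  have hcn : Complex.normSq c < 1 := by
    rw [Complex.normSq_eq_norm_sq]; nlinarith [norm_nonneg c]
  set L := Real.sqrt (1 - Complex.normSq c) with hLdef
  have hL0 : 0 < L := Real.sqrt_pos.mpr (by linarith)
  have hL2 : L^2 = 1 - Complex.normSq c := Real.sq_sqrt (by linarith)
  have hLne : ((L:ℝ):ℂ) ≠ 0 := by
    simpa using Complex.ofReal_ne_zero.mpr hL0.ne'
  set a := μ / (L:ℂ) with hadef
  set b := c * conj μ / (L:ℂ) with hbdef
  have hconjL : conj ((L:ℝ):ℂ) = ((L:ℝ):ℂ) := Complex.conj_ofReal L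
  have hL2C : ((L:ℝ):ℂ)^2 = 1 - c * conj c := by
    rw [Complex.mul_conj]
    rw [show ((L:ℝ):ℂ)^2 = ((L^2 : ℝ) : ℂ) by push_cast; ring, hL2]
    push_cast; ring
  have h1 : a * conj a - b * conj b = 1 := by
    rw [hadef, hbdef]
    simp only [map_div₀, map_mul, hconjL, Complex.conj_conj]
    field_simp
    linear_combination (1 - c * conj c) * hμc - hL2C
  have hs : Complex.normSq a - Complex.normSq b = 1 := by
    have h2 := h1
    rw [Complex.mul_conj, Complex.mul_conj] at h2
    exact_mod_cast h2
  have hBA : ‖b‖ < ‖a‖ := by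
    rw [hadef, hbdef]
    simp only [norm_div, norm_mul, Complex.norm_conj, Complex.norm_real, Real.norm_eq_abs,
      abs_of_pos hL0, hμabs]
    rw [div_lt_div_iff_of_pos_right hL0]
    nlinarith [norm_nonneg c]
  have hD : ∀ z ∈ Metric.ball (0:ℂ) 1, conj b * z + conj a ≠ 0 := by
    intro z hz hsum
    have h1' : conj b * z = -conj a := eq_neg_of_add_eq_zero_left hsum
    have h2' : ‖b‖ * ‖z‖ = ‖a‖ := by
      have := congrArg (‖·‖) h1'
      simpa [norm_mul, Complex.norm_conj] using this
    have hz1 : ‖z‖ < 1 := (hball z).mp hz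
    nlinarith [norm_nonneg b, norm_nonneg z, norm_nonneg a]
  have hφmob : ∀ z ∈ Metric.ball (0:ℂ) 1, φ z = (a*z+b)/(conj b * z + conj a) := by
    intro z hz
    have hform : φ z = (z*C + c)/(1 + conj c * (z*C)) := by
      rw [← hmg z hz, hgC z hz]
    have habsz : ‖z*C‖ < 1 := by
      rw [norm_mul, habsC, mul_one]; exact (hball z).mp hz
    have hden1 : (1:ℂ) + conj c * (z*C) ≠ 0 := hminv_den (z*C) habsz
    rw [hform]
    show (z*C + c)/(1 + conj c * (z*C)) = _
    rw [div_eq_div_iff hden1 (hD z hz)]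
    rw [hadef, hbdef]
    simp only [map_div₀, map_mul, hconjL, Complex.conj_conj]
    field_simp
    linear_combination (norm := ring_nf) z * μ * (1 - c * conj c) * hμc + z * (conj c * c - 1) * hμ + z * (1 - c * conj c) * (1 - conj μ) * hμ
  exact ⟨matA a b, matA_orth a b hs, matA_det a b hs, fun z w hz hw hne => by
    rw [hφmob z hz, hφmob w hw]
    exact key a b z w h1 (hD z hz) (hD w hw) (sub_ne_zero.mpr hne)⟩
end

section
/- For every point (u,v) in the open unit ball B₂ of ℂ², there exist complex numbers α, β with |α|² − |β|² = 1 and a real number t ∈ [0,1) such that conj(β)·v + conj(α) ≠ 0 and (u/(conj(β)·v + conj(α)), (α·v + β)/(conj(β)·v + conj(α))) = (t, 0); that is, every SU(1,1)-orbit of B₂ (for the embedded action) contains a point of the form (t,0) with t ∈ [0,1). -/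
/-- Every point of the unit ball `B₂` can be moved to a point `(t,0)`,
`t ∈ [0,1)`, by an element of the embedded `SU(1,1)`. -/
theorem SU11_orbit_reaches_axis (u v : ℂ)
    (huv : ‖u‖ ^ 2 + ‖v‖ ^ 2 < 1) :
    ∃ (α β : ℂ) (t : ℝ), ‖α‖ ^ 2 - ‖β‖ ^ 2 = 1 ∧
      t ∈ Set.Ico (0 : ℝ) 1 ∧
      (starRingEnd ℂ) β * v + (starRingEnd ℂ) α ≠ 0 ∧
      (u / ((starRingEnd ℂ) β * v + (starRingEnd ℂ) α),
        (α * v + β) / ((starRingEnd ℂ) β * v + (starRingEnd ℂ) α)) =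
        ((t : ℂ), (0 : ℂ)) := by
  have hu0 : (0:ℝ) ≤ ‖u‖ ^ 2 := by positivity
  have h1 : ‖v‖ ^ 2 < 1 := by linarith
  set s : ℝ := Real.sqrt (1 - ‖v‖ ^ 2) with hsdef
  have hs0 : 0 < s := Real.sqrt_pos.2 (by linarith)
  have hs2 : s ^ 2 = 1 - ‖v‖ ^ 2 := Real.sq_sqrt (by linarith)
  have hsne : (s : ℂ) ≠ 0 := by exact_mod_cast hs0.ne'
  set w : ℂ := if u = 0 then 1 else u / ‖u‖ with hw
  have hwabs : ‖w‖ = 1 := by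
    rw [hw]; split_ifs with h
    · simp
    · rw [norm_div, Complex.norm_real, norm_norm,
        div_self (norm_ne_zero_iff.mpr h)]
  have hw0 : w ≠ 0 := fun h => by simp [h] at hwabs
  have huw : u = (‖u‖ : ℂ) * w := by
    rw [hw]; split_ifs with h
    · simp [h]
    · rw [mul_div_assoc', mul_comm, mul_div_assoc,
        div_self (by exact_mod_cast norm_ne_zero_iff.mpr h), mul_one]
  have hvc : (starRingEnd ℂ) v * v = ((‖v‖ ^ 2 : ℝ) : ℂ) := by
    rw [mul_comm, Complex.mul_conj, Complex.normSq_eq_norm_sq]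
  have hd : (starRingEnd ℂ) (-((starRingEnd ℂ) w / s) * v) * v
      + (starRingEnd ℂ) ((starRingEnd ℂ) w / s) = w * s := by
    have e1 : (starRingEnd ℂ) (-((starRingEnd ℂ) w / s) * v) * v
        + (starRingEnd ℂ) ((starRingEnd ℂ) w / s)
        = w / s * (1 - (starRingEnd ℂ) v * v) := by
      simp only [map_mul, map_neg, map_div₀, Complex.conj_conj, Complex.conj_ofReal]
      ring
    have e2 : (1 : ℂ) - (starRingEnd ℂ) v * v = ((s ^ 2 : ℝ) : ℂ) := by
      rw [hvc, hs2]; push_cast; ring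
    rw [e1, e2]
    push_cast
    field_simp
  refine ⟨(starRingEnd ℂ) w / s, -((starRingEnd ℂ) w / s) * v, ‖u‖ / s,
    ?_, ⟨by positivity, ?_⟩, ?_, ?_⟩
  · have h3 : ‖(starRingEnd ℂ) w / s‖ = 1 / s := by
      rw [norm_div, Complex.norm_conj, hwabs, Complex.norm_real, Real.norm_eq_abs, abs_of_pos hs0]
    rw [norm_mul, norm_neg, h3]
    field_simp
    linarith
  · rw [div_lt_one hs0]
    exact (Real.lt_sqrt (norm_nonneg u)).2 (by linarith)
  · rw [hd]; exact mul_ne_zero hw0 hsne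
  · rw [hd]
    simp only [Prod.mk.injEq]
    constructor
    · rw [huw]
      push_cast
      field_simp
      rw [norm_mul, Complex.norm_real, norm_norm, hwabs, mul_one]
    · have e3 : (starRingEnd ℂ) w / s * v + -((starRingEnd ℂ) w / s) * v = 0 := by ring
      rw [e3, zero_div]
end

section
/- For every t ∈ (0,1), the orbit of the point (t,0) ∈ B₂ under the embedded SU(1,1)-action equals the set {(u,v) ∈ B₂ : |u|² + t²·|v|² = t²}; that is, {T_{α,β}(t,0) : α, β ∈ ℂ, |α|² − |β|² = 1} = {(u,v) ∈ B₂ : |u|² + t²·|v|² = t²}. -/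
/-- The orbit of `(u,v)` under the embedded `SU(1,1)`-action
`T_{α,β}(u,v) = (u/(conj β·v + conj α), (α·v + β)/(conj β·v + conj α))`. -/
noncomputable def SU11orbit (u v : ℂ) : Set (ℂ × ℂ) :=
  {p | ∃ α β : ℂ, ‖α‖ ^ 2 - ‖β‖ ^ 2 = 1 ∧
    p = (u / ((starRingEnd ℂ) β * v + (starRingEnd ℂ) α),
      (α * v + β) / ((starRingEnd ℂ) β * v + (starRingEnd ℂ) α))}

/-- For `t ∈ (0,1)`, the `SU(1,1)`-orbit of `(t,0)` in `B₂` is the ellipsoidal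
hypersurface `{(u,v) ∈ B₂ : |u|² + t²|v|² = t²}`. -/
theorem SU11_orbit_t (t : ℝ) (ht : t ∈ Set.Ioo (0 : ℝ) 1) :
    SU11orbit (t : ℂ) 0 =
      {p : ℂ × ℂ | ‖p.1‖ ^ 2 + ‖p.2‖ ^ 2 < 1 ∧
        ‖p.1‖ ^ 2 + t ^ 2 * ‖p.2‖ ^ 2 = t ^ 2} := by
  obtain ⟨ht0, ht1⟩ := ht
  ext ⟨u, v⟩
  simp only [SU11orbit, Set.mem_setOf_eq]
  constructor
  · rintro ⟨α, β, h, hp⟩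
    rw [Prod.mk.injEq] at hp
    obtain ⟨rfl, rfl⟩ := hp
    set A := ‖α‖ with hA
    set B := ‖β‖ with hB
    have hB0 : 0 ≤ B := norm_nonneg β
    have hA2 : A ^ 2 = 1 + B ^ 2 := by linarith
    have hApos : 0 < A := by nlinarith [norm_nonneg α]
    have hα : α ≠ 0 := by
      intro h0
      rw [h0] at hA
      simp [hA] at hApos
    simp only [mul_zero, zero_add]
    have h1 : ‖((t : ℂ) / ((starRingEnd ℂ) α))‖ ^ 2 = t ^ 2 / A ^ 2 := by
      rw [norm_div, Complex.norm_conj, div_pow, Complex.norm_real, Real.norm_eq_abs, sq_abs]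
    have h2 : ‖(β / ((starRingEnd ℂ) α))‖ ^ 2 = B ^ 2 / A ^ 2 := by
      rw [norm_div, Complex.norm_conj, div_pow]
    simp only [h1, h2]
    constructor
    · rw [← add_div, div_lt_one (by positivity)]
      nlinarith
    · field_simp
      nlinarith
  · rintro ⟨hball, heq⟩
    have hu : u ≠ 0 := by
      intro h0
      rw [h0] at hball heq
      simp at hball heq
      have hv2 : ‖v‖ ^ 2 < 1 := by nlinarith [norm_nonneg v]
      nlinarith [mul_pos (mul_pos ht0 ht0) (show (0:ℝ) < 1 - ‖v‖ ^ 2 by linarith)]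
    have htu : (t : ℂ) / u ≠ 0 := by
      simp [hu, ne_of_gt ht0, Complex.ofReal_ne_zero]
    refine ⟨(starRingEnd ℂ) ((t : ℂ) / u), v * ((t : ℂ) / u), ?_, ?_⟩
    · have hU : ‖u‖ ≠ 0 := by simpa using hu
      rw [Complex.norm_conj, norm_mul, norm_div, Complex.norm_real, Real.norm_eq_abs, abs_of_pos ht0]
      have : (t / ‖u‖) ^ 2 - (‖v‖ * (t / ‖u‖)) ^ 2
          = (t ^ 2 - t ^ 2 * ‖v‖ ^ 2) / ‖u‖ ^ 2 := by
        field_simp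
      rw [this]
      rw [div_eq_one_iff_eq (by positivity)]
      linarith
    · simp only [Complex.conj_conj, mul_zero, zero_add, Prod.mk.injEq]
      constructor
      · have ht0' : (t:ℂ) ≠ 0 := by
          simp [ne_of_gt ht0]
        field_simp
      · rw [mul_div_assoc, div_self htu, mul_one]
end
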